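/- arXiv:2011.06806 — 2 statements merged into one kernel-verified Lean document; each statement's English description precedes it below -/
import Mathlib

section
/- Strict decrease of the state norm outside the invariant set (Lemma 2, claim i): let x(k) be the GRU state trajectory generated from an initial state x̄ ∈ ℝ^{n_x} by an input sequence u with ‖u(t)‖_∞ ≤ 1 for all t. Then for every time k at which ‖x(k)‖_∞ > 1 it holds that ‖x(k+1)‖_∞ < ‖x(k)‖_∞, and consequently ‖x(k)‖_∞ ≤ max(‖x̄‖_∞, 1) for all k ≥ 0. -/
open Real Filter

/-- The sigmoid activation function. -/
noncomputable def sigmoid (s : ℝ) : ℝ := 1 / (1 + Real.exp (-s))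

/-- Induced infinity norm of a matrix (maximum absolute row sum). -/
noncomputable def matNorm {n m : ℕ} (A : Matrix (Fin n) (Fin m) ℝ) : ℝ :=
  ⨆ i, ∑ j, |A i j|

/-- Infinity norm of the horizontal concatenation `[A B c]`
(maximum absolute row sum of the concatenated matrix). -/
noncomputable def catNorm {n m p : ℕ} (A : Matrix (Fin n) (Fin m) ℝ)
    (B : Matrix (Fin n) (Fin p) ℝ) (c : Fin n → ℝ) : ℝ :=
  ⨆ i, (∑ j, |A i j| + ∑ j, |B i j| + |c i|)

/-- One step of the single-layer GRU:
`x⁺ = z ∘ x + (1 - z) ∘ tanh(W_r u + U_r (f ∘ x) + b_r)`,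
`z = σ(W_z u + U_z x + b_z)`, `f = σ(W_f u + U_f x + b_f)`. -/
noncomputable def gruStep {nu nx : ℕ}
    (Wz Wf Wr : Matrix (Fin nx) (Fin nu) ℝ)
    (Uz Uf Ur : Matrix (Fin nx) (Fin nx) ℝ)
    (bz bf br : Fin nx → ℝ)
    (u : Fin nu → ℝ) (x : Fin nx → ℝ) : Fin nx → ℝ :=
  let z : Fin nx → ℝ := fun i => _root_.sigmoid ((Wz.mulVec u + Uz.mulVec x + bz) i)
  let f : Fin nx → ℝ := fun i => _root_.sigmoid ((Wf.mulVec u + Uf.mulVec x + bf) i)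
  let r : Fin nx → ℝ := fun i => Real.tanh ((Wr.mulVec u + Ur.mulVec (f * x) + br) i)
  fun j => z j * x j + (1 - z j) * r j

lemma sigmoid_pos (s : ℝ) : 0 < _root_.sigmoid s := by
  unfold _root_.sigmoid
  positivity

lemma sigmoid_lt_one (s : ℝ) : _root_.sigmoid s < 1 := by
  unfold _root_.sigmoid
  rw [div_lt_one (by positivity)]
  linarith [Real.exp_pos (-s)]

lemma abs_tanh_le_one (t : ℝ) : |Real.tanh t| ≤ 1 := by
  rw [Real.tanh_eq_sinh_div_cosh, abs_div, abs_of_pos (Real.cosh_pos t),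
    div_le_one (Real.cosh_pos t)]
  rw [Real.sinh_eq, Real.cosh_eq]
  have h1 := Real.exp_pos t
  have h2 := Real.exp_pos (-t)
  rw [abs_le]
  constructor <;> nlinarith

lemma gruStep_comp_bound {nu nx : ℕ}
    (Wz Wf Wr : Matrix (Fin nx) (Fin nu) ℝ)
    (Uz Uf Ur : Matrix (Fin nx) (Fin nx) ℝ)
    (bz bf br : Fin nx → ℝ)
    (u : Fin nu → ℝ) (x : Fin nx → ℝ) (j : Fin nx) :
    ∃ z : ℝ, 0 < z ∧ z < 1 ∧
      |gruStep Wz Wf Wr Uz Uf Ur bz bf br u x j| ≤ z * ‖x‖ + (1 - z) := by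
  refine ⟨_root_.sigmoid ((Wz.mulVec u + Uz.mulVec x + bz) j), _root_.sigmoid_pos _, _root_.sigmoid_lt_one _, ?_⟩
  set z := _root_.sigmoid ((Wz.mulVec u + Uz.mulVec x + bz) j) with hz
  have hz0 : 0 < z := _root_.sigmoid_pos _
  have hz1 : z < 1 := _root_.sigmoid_lt_one _
  have hxj : |x j| ≤ ‖x‖ := by
    have := norm_le_pi_norm x j
    simpa [Real.norm_eq_abs] using this
  have htanh : |Real.tanh ((Wr.mulVec u +
      Ur.mulVec ((fun i => _root_.sigmoid ((Wf.mulVec u + Uf.mulVec x + bf) i)) * x) + br) j)| ≤ 1 :=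
    abs_tanh_le_one _
  calc |gruStep Wz Wf Wr Uz Uf Ur bz bf br u x j|
      ≤ |z * x j| + |(1 - z) * Real.tanh ((Wr.mulVec u +
          Ur.mulVec ((fun i => _root_.sigmoid ((Wf.mulVec u + Uf.mulVec x + bf) i)) * x) + br) j)| := by
        rw [gruStep]
        exact abs_add_le _ _
    _ ≤ z * ‖x‖ + (1 - z) := by
        rw [abs_mul, abs_mul, abs_of_pos hz0, abs_of_pos (by linarith : (0:ℝ) < 1 - z)]
        have h1 : z * |x j| ≤ z * ‖x‖ := by nlinarith
        nlinarith

/-- **Lemma 2, claim (i).** Along any GRU trajectory driven by unity-bounded inputs,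
the infinity norm of the state strictly decreases whenever it exceeds `1`; consequently
`‖x(k)‖_∞ ≤ max (‖x̄‖_∞, 1)` for all `k`. -/
theorem gru_norm_strict_decrease {nu nx : ℕ}
    (Wz Wf Wr : Matrix (Fin nx) (Fin nu) ℝ)
    (Uz Uf Ur : Matrix (Fin nx) (Fin nx) ℝ)
    (bz bf br : Fin nx → ℝ)
    (u : ℕ → Fin nu → ℝ) (hu : ∀ t, ‖u t‖ ≤ 1)
    (xbar : Fin nx → ℝ)
    (x : ℕ → Fin nx → ℝ) (hx0 : x 0 = xbar)
    (hstep : ∀ k, x (k + 1) = gruStep Wz Wf Wr Uz Uf Ur bz bf br (u k) (x k)) :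
    (∀ k, 1 < ‖x k‖ → ‖x (k + 1)‖ < ‖x k‖) ∧
      (∀ k, ‖x k‖ ≤ max ‖xbar‖ 1) := by
  have key : ∀ k j, |x (k + 1) j| ≤ max ‖x k‖ 1 ∧ (1 < ‖x k‖ → |x (k + 1) j| < ‖x k‖) := by
    intro k j
    obtain ⟨z, hz0, hz1, hb⟩ := gruStep_comp_bound Wz Wf Wr Uz Uf Ur bz bf br (u k) (x k) j
    rw [← hstep k] at hb
    constructor
    · rcases le_total ‖x k‖ 1 with h | h
      · have : z * ‖x k‖ + (1 - z) ≤ 1 := by nlinarith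
        calc |x (k + 1) j| ≤ _ := hb
          _ ≤ 1 := this
          _ ≤ max ‖x k‖ 1 := le_max_right _ _
      · have : z * ‖x k‖ + (1 - z) ≤ ‖x k‖ := by nlinarith
        calc |x (k + 1) j| ≤ _ := hb
          _ ≤ ‖x k‖ := this
          _ ≤ max ‖x k‖ 1 := le_max_left _ _
    · intro h
      have : z * ‖x k‖ + (1 - z) < ‖x k‖ := by nlinarith
      linarith
  have norm_step_lt : ∀ k, 1 < ‖x k‖ → ‖x (k + 1)‖ < ‖x k‖ := by
    intro k h
    have hpos : (0:ℝ) < ‖x k‖ := by linarith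
    rw [pi_norm_lt_iff hpos]
    intro j
    rw [Real.norm_eq_abs]
    exact (key k j).2 h
  refine ⟨norm_step_lt, ?_⟩
  intro k
  induction k with
  | zero => rw [hx0]; exact le_max_left _ _
  | succ n ih =>
      have h1 : ‖x (n + 1)‖ ≤ max ‖x n‖ 1 := by
        rcases Nat.eq_zero_or_pos nx with h | h
        · subst h
          simp [Pi.norm_def]
        · rw [pi_norm_le_iff_of_nonneg (le_trans (by norm_num) (le_max_right ‖x n‖ 1))]
          intro j
          rw [Real.norm_eq_abs]
          exact (key n j).1
      calc ‖x (n + 1)‖ ≤ max ‖x n‖ 1 := h1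
        _ ≤ max (max ‖xbar‖ 1) 1 := max_le_max ih le_rfl
        _ = max ‖xbar‖ 1 := by simp [max_assoc]
end

section
/- Quantified componentwise decrease (step of the proof of Lemma 2): let x(k) be the GRU state trajectory generated from an initial state x̄ ∈ ℝ^{n_x} by an input sequence u with ‖u(t)‖_∞ ≤ 1 for all t. Set λ = max(‖x̄‖_∞, 1), ω̲ = 1 − σ(‖[W_z λU_z b_z]‖_∞) and ε̲ = 1 − tanh(‖[W_r λU_r b_r]‖_∞). Then for every time k and every component j with |x_j(k)| > 1 it holds that |x_j(k+1)| < |x_j(k)| − ω̲ ε̲. -/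
open Real Filter

lemma sigmoid_mono : Monotone _root_.sigmoid := by
  intro a b hab
  unfold _root_.sigmoid
  apply one_div_le_one_div_of_le (by positivity)
  have := Real.exp_le_exp.2 (neg_le_neg hab)
  linarith

lemma sigmoid_neg (s : ℝ) : _root_.sigmoid (-s) = 1 - _root_.sigmoid s := by
  unfold _root_.sigmoid
  have h1 : (0:ℝ) < 1 + Real.exp (-s) := by positivity
  have h2 : (0:ℝ) < 1 + Real.exp (- -s) := by positivity
  have h3 : Real.exp (-s) * Real.exp s = 1 := by
    rw [← Real.exp_add]; simp
  field_simp
  nlinarith [h3]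

lemma tanh_eq' (x : ℝ) : Real.tanh x = 1 - 2 / (Real.exp (2*x) + 1) := by
  have h1 : Real.exp x ≠ 0 := (Real.exp_pos x).ne'
  have h2 : (0:ℝ) < Real.exp (2*x) + 1 := by positivity
  have hc : Real.exp (2*x) = Real.exp x * Real.exp x := by rw [two_mul, Real.exp_add]
  have h3 : (0:ℝ) < Real.exp x + Real.exp (-x) := by positivity
  rw [Real.tanh_eq_sinh_div_cosh, Real.sinh_eq, Real.cosh_eq, Real.exp_neg]
  rw [hc]
  field_simp
  ring

lemma tanh_mono : Monotone Real.tanh := by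
  intro a b hab
  rw [tanh_eq', tanh_eq']
  have h1 : (0:ℝ) < Real.exp (2*a) + 1 := by positivity
  have h2 : Real.exp (2*a) + 1 ≤ Real.exp (2*b) + 1 := by
    have := Real.exp_le_exp.2 (by linarith : 2*a ≤ 2*b); linarith
  have := div_le_div_of_nonneg_left (by norm_num : (0:ℝ) ≤ 2) h1 h2
  linarith [div_le_div_of_nonneg_left (by norm_num : (0:ℝ) ≤ 2) h1 h2]

lemma tanh_lt_one' (x : ℝ) : Real.tanh x < 1 := by
  rw [tanh_eq']
  have : (0:ℝ) < 2 / (Real.exp (2*x) + 1) := by positivity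
  linarith

lemma neg_one_lt_tanh (x : ℝ) : -1 < Real.tanh x := by
  rw [tanh_eq']
  have h1 : (0:ℝ) < Real.exp (2*x) + 1 := by positivity
  have : 2 / (Real.exp (2*x) + 1) < 2 := by
    rw [div_lt_iff₀ h1]; nlinarith [Real.exp_pos (2*x)]
  linarith

lemma tanh_nonneg' {x : ℝ} (hx : 0 ≤ x) : 0 ≤ Real.tanh x := by
  have h0 : Real.tanh 0 = 0 := by
    rw [tanh_eq']; norm_num
  calc (0:ℝ) = Real.tanh 0 := h0.symm
    _ ≤ Real.tanh x := _root_.tanh_mono hx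

lemma abs_tanh_le {s N : ℝ} (h : |s| ≤ N) : |Real.tanh s| ≤ Real.tanh N := by
  rw [abs_le] at h ⊢
  constructor
  · have : Real.tanh (-N) ≤ Real.tanh s := _root_.tanh_mono h.1
    rw [Real.tanh_neg] at this; linarith
  · exact _root_.tanh_mono h.2

lemma abs_tanh_lt_one (s : ℝ) : |Real.tanh s| < 1 := by
  rw [abs_lt]; exact ⟨_root_.neg_one_lt_tanh s, tanh_lt_one' s⟩

/-- Abstract one-step contraction estimate, positive case. -/
lemma key_pos (z r t w e : ℝ) (hzl : w ≤ z) (hzu : z ≤ 1 - w) (hw : 0 < w)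
    (hr : |r| ≤ 1 - e) (he : 0 < e) (he1 : e ≤ 1) (ht : 1 < t) :
    |z * t + (1 - z) * r| < t - w * e := by
  rw [abs_le] at hr
  rw [abs_lt]
  have hz' : 0 ≤ 1 - z := by linarith
  constructor
  · -- lower bound
    have h5 : w * t ≤ z * t := mul_le_mul_of_nonneg_right hzl (by linarith)
    have h6 : w < w * t := by nlinarith
    have h3 : -((1-z)*(1-e)) ≤ (1-z)*r := by nlinarith
    have h4 : (1-z)*(1-e) ≤ 1-w := by nlinarith
    have h7 : w*e ≤ w := by nlinarith
    linarith
  · -- upper bound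
    have h1 : w * e < w * (t - r) := by nlinarith
    have h2 : w * (t - r) ≤ (1-z) * (t - r) :=
      mul_le_mul_of_nonneg_right (by linarith) (by linarith)
    nlinarith

/-- Abstract one-step contraction estimate. -/
lemma key (z r t w e : ℝ) (hzl : w ≤ z) (hzu : z ≤ 1 - w) (hw : 0 < w)
    (hr : |r| ≤ 1 - e) (he : 0 < e) (he1 : e ≤ 1) (ht : 1 < |t|) :
    |z * t + (1 - z) * r| < |t| - w * e := by
  rcases le_or_gt 0 t with h | h
  · rw [abs_of_nonneg h] at ht ⊢
    exact key_pos z r t w e hzl hzu hw hr he he1 ht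
  · rw [abs_of_neg h] at ht ⊢
    have h1 : |z * (-t) + (1 - z) * (-r)| < -t - w * e := by
      apply key_pos z (-r) (-t) w e hzl hzu hw _ he he1 ht
      rwa [abs_neg]
    have h2 : z * (-t) + (1 - z) * (-r) = -(z * t + (1 - z) * r) := by ring
    rwa [h2, abs_neg] at h1

/-- Bound on an affine row evaluation by the concatenated norm. -/
lemma arg_bound {nu nx : ℕ} (A : Matrix (Fin nx) (Fin nu) ℝ)
    (B : Matrix (Fin nx) (Fin nx) ℝ) (c : Fin nx → ℝ) (lam : ℝ) (hlam : 0 ≤ lam)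
    (u : Fin nu → ℝ) (hu : ∀ i, |u i| ≤ 1)
    (v : Fin nx → ℝ) (hv : ∀ i, |v i| ≤ lam) (j : Fin nx) :
    |(A.mulVec u + B.mulVec v + c) j| ≤ catNorm A (lam • B) c := by
  have hrow : |(A.mulVec u + B.mulVec v + c) j| ≤
      ∑ i, |A j i| + ∑ i, |(lam • B) j i| + |c j| := by
    have h1 : |(A.mulVec u) j| ≤ ∑ i, |A j i| := by
      simp only [Matrix.mulVec, dotProduct]
      refine le_trans (Finset.abs_sum_le_sum_abs _ _) (Finset.sum_le_sum fun i _ => ?_)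
      rw [abs_mul]
      nlinarith [abs_nonneg (A j i), hu i, abs_nonneg (u i)]
    have h2 : |(B.mulVec v) j| ≤ ∑ i, |(lam • B) j i| := by
      simp only [Matrix.mulVec, dotProduct, Matrix.smul_apply, smul_eq_mul]
      refine le_trans (Finset.abs_sum_le_sum_abs _ _) (Finset.sum_le_sum fun i _ => ?_)
      rw [abs_mul, abs_mul, abs_of_nonneg hlam, mul_comm lam |B j i|]
      nlinarith [abs_nonneg (B j i), hv i, abs_nonneg (v i)]
    calc |(A.mulVec u + B.mulVec v + c) j|
        = |(A.mulVec u) j + (B.mulVec v) j + c j| := rfl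
      _ ≤ |(A.mulVec u) j + (B.mulVec v) j| + |c j| := abs_add_le _ _
      _ ≤ |(A.mulVec u) j| + |(B.mulVec v) j| + |c j| := by linarith [abs_add_le ((A.mulVec u) j) ((B.mulVec v) j)]
      _ ≤ ∑ i, |A j i| + ∑ i, |(lam • B) j i| + |c j| := by linarith
  refine le_trans hrow ?_
  unfold catNorm
  exact le_ciSup (f := fun i => ∑ j2, |A i j2| + ∑ j2, |(lam • B) i j2| + |c i|)
    (Set.finite_range _).bddAbove j

lemma catNorm_nonneg {nu nx : ℕ} (A : Matrix (Fin nx) (Fin nu) ℝ)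
    (B : Matrix (Fin nx) (Fin nx) ℝ) (c : Fin nx → ℝ) (j : Fin nx) :
    0 ≤ catNorm A B c := by
  refine le_trans ?_ (le_ciSup (Set.finite_range _).bddAbove j)
  positivity

/-- **Quantified componentwise decrease (step of the proof of Lemma 2).**
With `λ = max (‖x̄‖_∞, 1)`, `ω̲ = 1 - σ(‖[W_z λU_z b_z]‖_∞)` and
`ε̲ = 1 - tanh(‖[W_r λU_r b_r]‖_∞)`, whenever `|x_j(k)| > 1` one has
`|x_j(k+1)| < |x_j(k)| - ω̲ ε̲`. -/
theorem gru_componentwise_decrease {nu nx : ℕ}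
    (Wz Wf Wr : Matrix (Fin nx) (Fin nu) ℝ)
    (Uz Uf Ur : Matrix (Fin nx) (Fin nx) ℝ)
    (bz bf br : Fin nx → ℝ)
    (u : ℕ → Fin nu → ℝ) (hu : ∀ t, ‖u t‖ ≤ 1)
    (xbar : Fin nx → ℝ)
    (x : ℕ → Fin nx → ℝ) (hx0 : x 0 = xbar)
    (hstep : ∀ k, x (k + 1) = gruStep Wz Wf Wr Uz Uf Ur bz bf br (u k) (x k)) :
    ∀ k (j : Fin nx), 1 < |x k j| →
      |x (k + 1) j| < |x k j| -
        (1 - _root_.sigmoid (catNorm Wz ((max ‖xbar‖ 1) • Uz) bz)) *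
          (1 - Real.tanh (catNorm Wr ((max ‖xbar‖ 1) • Ur) br)) := by
  set lam : ℝ := max ‖xbar‖ 1 with hlam_def
  have hlam1 : (1:ℝ) ≤ lam := le_max_right _ _
  have hlam0 : (0:ℝ) ≤ lam := by linarith
  have hu' : ∀ t i, |u t i| ≤ 1 := fun t i => by
    have := norm_le_pi_norm (u t) i
    rw [Real.norm_eq_abs] at this
    exact le_trans this (hu t)
  -- invariant : every state component is bounded by lam
  have hinv : ∀ k i, |x k i| ≤ lam := by
    intro k
    induction k with
    | zero =>
      intro i
      rw [hx0]
      have := norm_le_pi_norm xbar i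
      rw [Real.norm_eq_abs] at this
      exact le_trans this (le_max_left _ _)
    | succ k ih =>
      intro i
      rw [hstep k]
      show |_root_.sigmoid ((Wz.mulVec (u k) + Uz.mulVec (x k) + bz) i) * x k i +
        (1 - _root_.sigmoid ((Wz.mulVec (u k) + Uz.mulVec (x k) + bz) i)) *
        Real.tanh ((Wr.mulVec (u k) + Ur.mulVec
          ((fun i => _root_.sigmoid ((Wf.mulVec (u k) + Uf.mulVec (x k) + bf) i)) * x k) + br) i)| ≤ lam
      set zi := _root_.sigmoid ((Wz.mulVec (u k) + Uz.mulVec (x k) + bz) i)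
      set ri := Real.tanh ((Wr.mulVec (u k) + Ur.mulVec
          ((fun i => _root_.sigmoid ((Wf.mulVec (u k) + Uf.mulVec (x k) + bf) i)) * x k) + br) i)
      have hz0 : 0 < zi := _root_.sigmoid_pos _
      have hz1 : zi < 1 := _root_.sigmoid_lt_one _
      have hri : |ri| < 1 := _root_.abs_tanh_lt_one _
      have hxi := ih i
      rw [abs_lt] at hri
      rw [abs_le] at hxi ⊢
      constructor <;> nlinarith
  intro k j hj
  set Nz : ℝ := catNorm Wz (lam • Uz) bz with hNz
  set Nr : ℝ := catNorm Wr (lam • Ur) br with hNr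
  set w : ℝ := 1 - _root_.sigmoid Nz with hw_def
  set e : ℝ := 1 - Real.tanh Nr with he_def
  have hNr0 : 0 ≤ Nr := catNorm_nonneg _ _ _ j
  have hw : 0 < w := by have := _root_.sigmoid_lt_one Nz; simp [hw_def]; linarith
  have he : 0 < e := by have := tanh_lt_one' Nr; simp [he_def]; linarith
  have he1 : e ≤ 1 := by have := tanh_nonneg' hNr0; simp [he_def]; linarith
  -- bounds for the gate and candidate at step k, component j
  have hzarg : |(Wz.mulVec (u k) + Uz.mulVec (x k) + bz) j| ≤ Nz :=
    arg_bound Wz Uz bz lam hlam0 (u k) (hu' k) (x k) (hinv k) j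
  set zj := _root_.sigmoid ((Wz.mulVec (u k) + Uz.mulVec (x k) + bz) j) with hzj
  have hzl : w ≤ zj := by
    have h1 : -Nz ≤ (Wz.mulVec (u k) + Uz.mulVec (x k) + bz) j := (abs_le.1 hzarg).1
    have := _root_.sigmoid_mono h1
    rw [_root_.sigmoid_neg] at this
    exact this
  have hzu : zj ≤ 1 - w := by
    have := _root_.sigmoid_mono (abs_le.1 hzarg).2
    simp [hw_def]; linarith
  set fv := (fun i => _root_.sigmoid ((Wf.mulVec (u k) + Uf.mulVec (x k) + bf) i)) with hfv
  have hfx : ∀ i, |(fv * x k) i| ≤ lam := by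
    intro i
    have h0 := _root_.sigmoid_pos ((Wf.mulVec (u k) + Uf.mulVec (x k) + bf) i)
    have h1 := _root_.sigmoid_lt_one ((Wf.mulVec (u k) + Uf.mulVec (x k) + bf) i)
    have h2 := hinv k i
    show |fv i * x k i| ≤ lam
    rw [abs_mul, abs_of_pos (by simpa [hfv] using h0)]
    have : |fv i| ≤ 1 := by
      rw [abs_of_pos (by simpa [hfv] using h0)]
      simp only [hfv]; linarith
    nlinarith [abs_nonneg (x k i)]
  have hrarg : |(Wr.mulVec (u k) + Ur.mulVec (fv * x k) + br) j| ≤ Nr :=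
    arg_bound Wr Ur br lam hlam0 (u k) (hu' k) (fv * x k) hfx j
  set rj := Real.tanh ((Wr.mulVec (u k) + Ur.mulVec (fv * x k) + br) j) with hrj
  have hr : |rj| ≤ 1 - e := by
    have := abs_tanh_le hrarg
    simp [he_def]; linarith [this]
  have hx1 : x (k+1) j = zj * x k j + (1 - zj) * rj := by
    rw [hstep k]; rfl
  rw [hx1]
  exact key zj rj (x k j) w e hzl hzu hw hr he he1 hj
end
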